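/- The image under the toric moment map of the set of simple unit 2-forms on ℝ⁶ (the Grassmannian orbit parametrizing orthogonal almost product structures) is the solid octahedron: {μ(baᵀ − abᵀ) : a, b ∈ ℝ⁶ orthonormal} = {(x,y,z) ∈ ℝ³ : |x| + |y| + |z| ≤ 1}. -/

import Mathlib

open Matrix

noncomputable section

/-- The toric moment map `μ(A) = (⟨Ae₁,e₂⟩, ⟨Ae₃,e₄⟩, ⟨Ae₅,e₆⟩)`. -/
def μ (A : Matrix (Fin 6) (Fin 6) ℝ) : ℝ × ℝ × ℝ := (A 1 0, A 3 2, A 5 4)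

lemma key (u v w z : ℝ) : |u*z - v*w| ≤ (u*u+v*v+w*w+z*z)/2 := by
  rw [abs_le]
  constructor
  · nlinarith [sq_nonneg (u+z), sq_nonneg (v-w)]
  · nlinarith [sq_nonneg (u-z), sq_nonneg (v+w)]

lemma sq_q (x c : ℝ) : (Real.sign x * Real.sqrt |x| * c) * (Real.sign x * Real.sqrt |x| * c) = |x| * (c*c) := by
  have h1 : Real.sqrt |x| * Real.sqrt |x| = |x| := Real.mul_self_sqrt (abs_nonneg x)
  rcases lt_trichotomy x 0 with h|h|h
  · rw [Real.sign_of_neg h]; nlinarith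
  · subst h; simp
  · rw [Real.sign_of_pos h]; nlinarith

lemma pq (x s : ℝ) (hs : 0 < s) :
    Real.sign x * Real.sqrt |x| * Real.sqrt s * (Real.sqrt |x| / Real.sqrt s) = x := by
  have h1 : Real.sqrt |x| * Real.sqrt |x| = |x| := Real.mul_self_sqrt (abs_nonneg x)
  have hsgn : Real.sign x * |x| = x := by
    rcases lt_trichotomy x 0 with h|h|h
    · rw [Real.sign_of_neg h, abs_of_neg h]; ring
    · subst h; simp
    · rw [Real.sign_of_pos h, abs_of_pos h]; ring
  have h2 : Real.sqrt s ≠ 0 := ne_of_gt (Real.sqrt_pos.2 hs)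
  field_simp
  linear_combination Real.sign x * h1 + hsgn

/-- The image under the toric moment map of the set of simple unit 2-forms
`a ∧ b` on `ℝ⁶` (the Grassmannian orbit of almost product structures) is the
solid octahedron `|x| + |y| + |z| ≤ 1`. -/
theorem moment_image_grassmannian :
    {p : ℝ × ℝ × ℝ | ∃ a b : Fin 6 → ℝ,
        a ⬝ᵥ a = 1 ∧ b ⬝ᵥ b = 1 ∧ a ⬝ᵥ b = 0 ∧
        p = μ (vecMulVec b a - vecMulVec a b)} =
    {p : ℝ × ℝ × ℝ | |p.1| + |p.2.1| + |p.2.2| ≤ 1} := by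
  ext ⟨x, y, z⟩
  simp only [Set.mem_setOf_eq]
  constructor
  · rintro ⟨a, b, ha, hb, hab, hp⟩
    simp only [μ, vecMulVec_apply, Matrix.sub_apply, Prod.mk.injEq] at hp
    obtain ⟨h1, h2, h3⟩ := hp
    simp only [dotProduct, Fin.sum_univ_six] at ha hb
    have k1 := key (b 1) (b 0) (a 1) (a 0)
    have k2 := key (b 3) (b 2) (a 3) (a 2)
    have k3 := key (b 5) (b 4) (a 5) (a 4)
    rw [show b 1 * a 0 - b 0 * a 1 = b 1 * a 0 - a 1 * b 0 by ring] at k1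
    rw [show b 3 * a 2 - b 2 * a 3 = b 3 * a 2 - a 3 * b 2 by ring] at k2
    rw [show b 5 * a 4 - b 4 * a 5 = b 5 * a 4 - a 5 * b 4 by ring] at k3
    rw [h1, h2, h3]
    linarith
  · intro h
    by_cases hxy : |x| + |y| = 0
    · have hx : x = 0 := by
        have h1 := abs_nonneg x; have h2 := abs_nonneg y
        have : |x| = 0 := by linarith
        exact abs_eq_zero.mp this
      have hy : y = 0 := by
        have h1 := abs_nonneg x; have h2 := abs_nonneg y
        have : |y| = 0 := by linarith
        exact abs_eq_zero.mp this
      have hz : |z| ≤ 1 := by rw [hx, hy] at h; simpa using h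
      have hz2 : z^2 ≤ 1 := by nlinarith [abs_nonneg z, sq_abs z]
      have hw : Real.sqrt (1 - z^2) * Real.sqrt (1 - z^2) = 1 - z^2 :=
        Real.mul_self_sqrt (by linarith)
      refine ⟨![0,0,0,0,1,0], ![Real.sqrt (1 - z^2), 0, 0, 0, 0, z], ?_, ?_, ?_, ?_⟩
      · simp only [dotProduct, Fin.sum_univ_six]
        show (0:ℝ)*0+0*0+0*0+0*0+1*1+0*0 = 1
        ring
      · simp only [dotProduct, Fin.sum_univ_six]
        show Real.sqrt (1 - z^2) * Real.sqrt (1 - z^2) + 0*0+0*0+0*0+0*0 + z*z = 1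
        rw [hw]; ring
      · simp only [dotProduct, Fin.sum_univ_six]
        show (0:ℝ)*Real.sqrt (1 - z^2)+0*0+0*0+0*0+1*0+0*z = 0
        ring
      · simp only [μ, vecMulVec_apply, Matrix.sub_apply, Prod.mk.injEq]
        refine ⟨?_, ?_, ?_⟩
        · show x = 0*0 - 0*Real.sqrt (1 - z^2); rw [hx]; ring
        · show y = 0*0 - 0*0; rw [hy]; ring
        · show z = z*1 - 0*0; ring
    · set s : ℝ := |x| + |y| + |z| with hs_def
      have habsz := abs_nonneg z
      have habsx := abs_nonneg x
      have habsy := abs_nonneg y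
      have hxy' : 0 < |x| + |y| := lt_of_le_of_ne (by positivity) (Ne.symm hxy)
      have hs : 0 < s := by rw [hs_def]; linarith
      have hs1 : s ≤ 1 := h
      set α : ℝ := Real.sqrt s with hα_def
      have hα : α * α = s := Real.mul_self_sqrt hs.le
      have hαne : α ≠ 0 := by
        intro h0; rw [h0] at hα; nlinarith
      set t : ℝ := Real.sqrt ((1 - s^2)/(|x|+|y|)) with ht_def
      have ht : t * t = (1 - s^2)/(|x|+|y|) := by
        apply Real.mul_self_sqrt
        apply div_nonneg _ hxy'.le
        nlinarith
      have ht2 : t * t * (|x| + |y|) = 1 - s^2 := by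
        rw [ht]; field_simp
      have hsx : Real.sqrt |x| * Real.sqrt |x| = |x| := Real.mul_self_sqrt habsx
      have hsy : Real.sqrt |y| * Real.sqrt |y| = |y| := Real.mul_self_sqrt habsy
      have hsz : Real.sqrt |z| * Real.sqrt |z| = |z| := Real.mul_self_sqrt habsz
      refine ⟨![Real.sqrt |x| / α, 0, Real.sqrt |y| / α, 0, Real.sqrt |z| / α, 0],
        ![t * Real.sqrt |y|, Real.sign x * Real.sqrt |x| * α,
          -(t * Real.sqrt |x|), Real.sign y * Real.sqrt |y| * α,
          0, Real.sign z * Real.sqrt |z| * α], ?_, ?_, ?_, ?_⟩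
      · simp only [dotProduct, Fin.sum_univ_six]
        show Real.sqrt |x| / α * (Real.sqrt |x| / α) + 0*0
          + Real.sqrt |y| / α * (Real.sqrt |y| / α) + 0*0
          + Real.sqrt |z| / α * (Real.sqrt |z| / α) + 0*0 = 1
        field_simp
        linear_combination -hα + hsx + hsy + hsz
      · simp only [dotProduct, Fin.sum_univ_six]
        show t * Real.sqrt |y| * (t * Real.sqrt |y|)
          + Real.sign x * Real.sqrt |x| * α * (Real.sign x * Real.sqrt |x| * α)
          + -(t * Real.sqrt |x|) * -(t * Real.sqrt |x|)
          + Real.sign y * Real.sqrt |y| * α * (Real.sign y * Real.sqrt |y| * α)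
          + 0*0
          + Real.sign z * Real.sqrt |z| * α * (Real.sign z * Real.sqrt |z| * α) = 1
        rw [sq_q x α, sq_q y α, sq_q z α, hα]
        linear_combination (t*t) * hsy + (t*t) * hsx + ht2 - s * hs_def
      · simp only [dotProduct, Fin.sum_univ_six]
        show Real.sqrt |x| / α * (t * Real.sqrt |y|)
          + 0 * (Real.sign x * Real.sqrt |x| * α)
          + Real.sqrt |y| / α * -(t * Real.sqrt |x|)
          + 0 * (Real.sign y * Real.sqrt |y| * α)
          + Real.sqrt |z| / α * 0
          + 0 * (Real.sign z * Real.sqrt |z| * α) = 0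
        ring
      · simp only [μ, vecMulVec_apply, Matrix.sub_apply, Prod.mk.injEq]
        refine ⟨?_, ?_, ?_⟩
        · show x = Real.sign x * Real.sqrt |x| * α * (Real.sqrt |x| / α)
            - 0 * (t * Real.sqrt |y|)
          rw [zero_mul, sub_zero, hα_def]
          exact (pq x s hs).symm
        · show y = Real.sign y * Real.sqrt |y| * α * (Real.sqrt |y| / α)
            - 0 * -(t * Real.sqrt |x|)
          rw [zero_mul, sub_zero, hα_def]
          exact (pq y s hs).symm
        · show z = Real.sign z * Real.sqrt |z| * α * (Real.sqrt |z| / α) - 0 * 0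
          rw [zero_mul, sub_zero, hα_def]
          exact (pq z s hs).symm
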